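/- Let (M₁,d₁), (M₂,d₂), M, d, π be as in the previous gluing construction, let μ₁ be a finite Borel measure on M₁, and let μ₂ := μ₁ ∘ π^{-1} be its pushforward. Then the Prohorov distance between the images of μ₁ and μ₂ in (M,d) (under the canonical isometric embeddings ψ₁, ψ₂) satisfies d_P(μ₁∘ψ₁^{-1}, μ₂∘ψ₂^{-1}) ≤ (1/2)·dis(π). -/

import Mathlib

open MeasureTheory

/-- The distortion of a map π : M₁ → M₂ between metric spaces. -/
noncomputable def glueDis {M₁ M₂ : Type*} [MetricSpace M₁] [MetricSpace M₂]
    (π : M₁ → M₂) : ℝ :=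
  sSup (Set.range fun p : M₁ × M₁ => |dist p.1 p.2 - dist (π p.1) (π p.2)|)

/-- The glued distance on the disjoint union M₁ ⊕ M₂ associated with π. -/
noncomputable def glueDist {M₁ M₂ : Type*} [MetricSpace M₁] [MetricSpace M₂]
    (π : M₁ → M₂) : M₁ ⊕ M₂ → M₁ ⊕ M₂ → ℝ
  | Sum.inl z, Sum.inl z' => dist z z'
  | Sum.inr w, Sum.inr w' => dist w w'
  | Sum.inl z, Sum.inr w => glueDis π / 2 + ⨅ x : M₁, (dist z x + dist (π x) w)
  | Sum.inr w, Sum.inl z => glueDis π / 2 + ⨅ x : M₁, (dist z x + dist (π x) w)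

/-- In the glued space M₁ ⊕ M₂, the Prohorov distance (defined via the condition
ν₁(A) ≤ ν₂(A^ε) + ε for all A) between the images of a finite measure μ₁ on M₁
and of its pushforward μ₂ = μ₁ ∘ π⁻¹ on M₂ is at most half of the distortion of
π. -/
theorem stmt13 {M₁ M₂ : Type*} [MetricSpace M₁] [MetricSpace M₂] [Nonempty M₁]
    [MeasurableSpace M₁] [BorelSpace M₁] [MeasurableSpace M₂] [BorelSpace M₂]
    (π : M₁ → M₂) (hπ : Function.Surjective π) (hπm : Measurable π)
    (hbdd : BddAbove (Set.range fun p : M₁ × M₁ =>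
      |dist p.1 p.2 - dist (π p.1) (π p.2)|))
    (μ₁ : Measure M₁) [IsFiniteMeasure μ₁] :
    sInf {ε : ℝ | 0 < ε ∧ ∀ A : Set (M₁ ⊕ M₂),
        μ₁ (Sum.inl ⁻¹' A)
          ≤ (μ₁.map π) (Sum.inr ⁻¹' {p : M₁ ⊕ M₂ | ∃ q ∈ A, glueDist π p q < ε})
            + ENNReal.ofReal ε}
      ≤ glueDis π / 2 := by
  have hD : 0 ≤ glueDis π := by
    obtain ⟨x⟩ := (inferInstance : Nonempty M₁)
    have := le_csSup hbdd (Set.mem_range.2 ⟨(x, x), rfl⟩)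
    exact this.trans_eq' (by simp)
  -- every ε > glueDis π / 2 belongs to the set
  have hmem : ∀ ε : ℝ, glueDis π / 2 < ε → ε ∈ {ε : ℝ | 0 < ε ∧ ∀ A : Set (M₁ ⊕ M₂),
        μ₁ (Sum.inl ⁻¹' A)
          ≤ (μ₁.map π) (Sum.inr ⁻¹' {p : M₁ ⊕ M₂ | ∃ q ∈ A, glueDist π p q < ε})
            + ENNReal.ofReal ε} := by
    intro ε hε
    refine ⟨lt_of_le_of_lt (by linarith) hε, fun A => ?_⟩
    have hsub : (Sum.inl ⁻¹' A : Set M₁) ⊆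
        π ⁻¹' (Sum.inr ⁻¹' {p : M₁ ⊕ M₂ | ∃ q ∈ A, glueDist π p q < ε}) := by
      intro x hx
      refine ⟨Sum.inl x, hx, ?_⟩
      show glueDis π / 2 + (⨅ y : M₁, (dist x y + dist (π y) (π x))) < ε
      have hinf : (⨅ y : M₁, (dist x y + dist (π y) (π x))) ≤ 0 := by
        have := ciInf_le (f := fun y : M₁ => dist x y + dist (π y) (π x))
          ⟨0, fun r ⟨y, hy⟩ => hy ▸ by positivity⟩ x
        simpa using this
      linarith
    calc μ₁ (Sum.inl ⁻¹' A)
        ≤ μ₁ (π ⁻¹' (Sum.inr ⁻¹' {p : M₁ ⊕ M₂ | ∃ q ∈ A, glueDist π p q < ε})) :=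
          measure_mono hsub
      _ ≤ (μ₁.map π) (Sum.inr ⁻¹' {p : M₁ ⊕ M₂ | ∃ q ∈ A, glueDist π p q < ε}) :=
          Measure.le_map_apply hπm.aemeasurable _
      _ ≤ _ := le_self_add
  have hbb : BddBelow {ε : ℝ | 0 < ε ∧ ∀ A : Set (M₁ ⊕ M₂),
        μ₁ (Sum.inl ⁻¹' A)
          ≤ (μ₁.map π) (Sum.inr ⁻¹' {p : M₁ ⊕ M₂ | ∃ q ∈ A, glueDist π p q < ε})
            + ENNReal.ofReal ε} := ⟨0, fun ε hε => hε.1.le⟩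
  refine le_of_forall_pos_le_add fun δ hδ => ?_
  exact (csInf_le hbb (hmem _ (by linarith))).trans le_rfl
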